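/- For a weight structure w on a triangulated category C, the class C_{w≥0} equals the right orthogonal of C_{w≤-1}, that is, C_{w≥0} = {N : Hom(M, N) = 0 for all M ∈ C_{w≤0}[-1]}. -/

import Mathlib

open CategoryTheory CategoryTheory.Limits CategoryTheory.Pretriangulated

universe v u u'

variable (C : Type u) [Category.{v} C] [HasZeroObject C] [HasShift C ℤ]
  [Preadditive C] [∀ n : ℤ, (shiftFunctor C n).Additive] [Pretriangulated C]

/-- A weight structure on a triangulated category `C`:
a pair of Karoubi-closed classes `le = C_{w≤0}` and `ge = C_{w≥0}` satisfying
semi-invariance with respect to translations, orthogonality and the existence of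
weight decompositions. -/
structure WeightStructure where
  /-- the class `C_{w≤0}` -/
  le : Set C
  /-- the class `C_{w≥0}` -/
  ge : Set C
  /-- `C_{w≤0}` is Karoubi-closed (contains all retracts of its elements) -/
  le_retract : ∀ ⦃M N : C⦄, N ∈ le → ∀ (i : M ⟶ N) (r : N ⟶ M), i ≫ r = 𝟙 M → M ∈ le
  /-- `C_{w≥0}` is Karoubi-closed -/
  ge_retract : ∀ ⦃M N : C⦄, N ∈ ge → ∀ (i : M ⟶ N) (r : N ⟶ M), i ≫ r = 𝟙 M → M ∈ ge
  /-- `C_{w≤0} ⊆ C_{w≤0}[1]`, i.e. `M ∈ C_{w≤0} → M[-1] ∈ C_{w≤0}` -/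
  le_shift : ∀ ⦃M : C⦄, M ∈ le → M⟦(-1 : ℤ)⟧ ∈ le
  /-- `C_{w≥0}[1] ⊆ C_{w≥0}` -/
  ge_shift : ∀ ⦃M : C⦄, M ∈ ge → M⟦(1 : ℤ)⟧ ∈ ge
  /-- orthogonality: `C_{w≤0} ⊥ C_{w≥0}[1]` -/
  orth : ∀ ⦃M N : C⦄, M ∈ le → N ∈ ge → ∀ f : M ⟶ N⟦(1 : ℤ)⟧, f = 0
  /-- weight decompositions -/
  decomp : ∀ M : C, ∃ (L R : C) (f : L ⟶ M) (g : M ⟶ R) (h : R ⟶ L⟦(1 : ℤ)⟧),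
    Triangle.mk f g h ∈ (distTriang C) ∧ L ∈ le ∧ R⟦(-1 : ℤ)⟧ ∈ ge

/-- For a weight structure `w` on `C`, the class `C_{w≥0}` equals the right orthogonal
of `C_{w≤-1} = C_{w≤0}[-1]`: `C_{w≥0} = {N | Hom(M[-1], N) = 0 for all M ∈ C_{w≤0}}`. -/
theorem ge_eq_right_orthogonal (w : WeightStructure C) :
    w.ge = {N : C | ∀ M ∈ w.le, ∀ f : M⟦(-1 : ℤ)⟧ ⟶ N, f = 0} := by
  ext N
  constructor
  · intro hN M hM f
    have h1 : (shiftFunctor C (1:ℤ)).map f = 0 := by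
      have h := w.orth hM hN
        ((shiftFunctorCompIsoId C (-1) 1 (by omega)).inv.app M ≫ (shiftFunctor C (1:ℤ)).map f)
      rw [← cancel_epi ((shiftFunctorCompIsoId C (-1) 1 (by omega)).inv.app M), comp_zero]
      exact h
    exact (shiftFunctor C (1:ℤ)).map_injective (by rw [h1, Functor.map_zero])
  · intro hN
    obtain ⟨L, R, f, g, h, hT, hL, hR⟩ := w.decomp (N⟦(1:ℤ)⟧)
    have hf : f = 0 := by
      have h1 : (shiftFunctor C (-1:ℤ)).map f = 0 := by
        have h := hN L hL
          ((shiftFunctor C (-1:ℤ)).map f ≫ (shiftFunctorCompIsoId C 1 (-1) (by omega)).hom.app N)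
        rw [← cancel_mono ((shiftFunctorCompIsoId C 1 (-1) (by omega)).hom.app N), zero_comp]
        exact h
      exact (shiftFunctor C (-1:ℤ)).map_injective (by rw [h1, Functor.map_zero])
    obtain ⟨r, hr⟩ : ∃ r : R ⟶ N⟦(1:ℤ)⟧, 𝟙 (N⟦(1:ℤ)⟧) = g ≫ r := Triangle.yoneda_exact₂ _ hT (𝟙 (N⟦(1:ℤ)⟧)) (by change f ≫ 𝟙 (N⟦(1:ℤ)⟧) = 0; rw [hf, zero_comp])
    change 𝟙 (N⟦(1:ℤ)⟧) = g ≫ r at hr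
    have hRet : (N⟦(1:ℤ)⟧)⟦(-1:ℤ)⟧ ∈ w.ge := by
      apply w.ge_retract hR ((shiftFunctor C (-1:ℤ)).map g) ((shiftFunctor C (-1:ℤ)).map r)
      rw [← Functor.map_comp, ← hr]
      exact (shiftFunctor C (-1:ℤ)).map_id _
    exact w.ge_retract hRet ((shiftFunctorCompIsoId C 1 (-1) (by omega)).inv.app N)
      ((shiftFunctorCompIsoId C 1 (-1) (by omega)).hom.app N) (by simp)
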